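/- If a measurable set O ⊆ ℝ^d is (γ, ρ)-thick with respect to a continuous positive density ρ (i.e. |O ∩ B(x, ρ(x))| ≥ γ |B(x, ρ(x))| for all x), and ρ₂ is another continuous positive function with ρ(x) ≤ ρ₂(x) for all x, then O is (γ/9^d, 3ρ₂)-thick, i.e. |O ∩ B(x, 3ρ₂(x))| ≥ (γ/9^d) |B(x, 3ρ₂(x))| for all x ∈ ℝ^d. -/

import Mathlib

open MeasureTheory Metric Set

/-- If a measurable set `O ⊆ ℝ^d` is `(γ, ρ)`-thick w.r.t. a continuous positive density `ρ`,
and `ρ₂` is another continuous positive function with `ρ ≤ ρ₂` pointwise, then `O` is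
`(γ/9^d, 3ρ₂)`-thick. -/
theorem stmt0 (d : ℕ) (γ : ℝ) (hγ0 : 0 < γ) (hγ1 : γ ≤ 1)
    (ρ ρ₂ : EuclideanSpace ℝ (Fin d) → ℝ)
    (hρ_cont : Continuous ρ) (hρ_pos : ∀ x, 0 < ρ x)
    (hρ₂_cont : Continuous ρ₂) (hρ₂_pos : ∀ x, 0 < ρ₂ x)
    (hle : ∀ x, ρ x ≤ ρ₂ x)
    (O : Set (EuclideanSpace ℝ (Fin d))) (hO : MeasurableSet O)
    (hthick : ∀ x, ENNReal.ofReal γ * volume (ball x (ρ x)) ≤ volume (O ∩ ball x (ρ x))) :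
    ∀ x, ENNReal.ofReal (γ / 9 ^ d) * volume (ball x (3 * ρ₂ x))
      ≤ volume (O ∩ ball x (3 * ρ₂ x)) := by
  intro x
  rcases Nat.eq_zero_or_pos d with hd0 | hd
  · subst hd0
    have huniv : ∀ (c : EuclideanSpace ℝ (Fin 0)) {r : ℝ}, 0 < r → ball c r = univ := by
      intro c r hr
      apply eq_univ_of_forall
      intro y
      have : y = c := Subsingleton.elim y c
      simp [mem_ball, this, hr]
    rw [huniv x (by have := hρ₂_pos x; linarith : (0:ℝ) < 3 * ρ₂ x), pow_zero, div_one]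
    have h := hthick x
    rwa [huniv x (hρ_pos x)] at h
  haveI : Nontrivial (EuclideanSpace ℝ (Fin d)) :=
    Module.nontrivial_of_finrank_pos (R := ℝ) (by rw [finrank_euclideanSpace_fin]; exact hd)
  set R := ρ₂ x with hRdef
  have hR : 0 < R := hρ₂_pos x
  have hdim : Module.finrank ℝ (EuclideanSpace ℝ (Fin d)) = d := finrank_euclideanSpace_fin
  have hvb : ∀ (c : EuclideanSpace ℝ (Fin d)) {r : ℝ}, 0 ≤ r →
      volume (ball c r) = ENNReal.ofReal (r ^ d) * volume (ball (0 : EuclideanSpace ℝ (Fin d)) 1) := by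
    intro c r hr
    rw [Measure.addHaar_ball volume c hr, hdim]
  have hvcb : ∀ (c : EuclideanSpace ℝ (Fin d)) {r : ℝ}, 0 ≤ r →
      volume (closedBall c r) = ENNReal.ofReal (r ^ d) * volume (ball (0 : EuclideanSpace ℝ (Fin d)) 1) := by
    intro c r hr
    rw [Measure.addHaar_closedBall volume c hr, hdim]
  set v1 := volume (ball (0 : EuclideanSpace ℝ (Fin d)) 1) with hv1
  have hLHS : ENNReal.ofReal (γ / 9 ^ d) * volume (ball x (3 * R))
      = ENNReal.ofReal γ * (ENNReal.ofReal ((R / 3) ^ d) * v1) := by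
    rw [hvb x (by linarith), ← mul_assoc, ← mul_assoc,
      ← ENNReal.ofReal_mul (div_nonneg hγ0.le (by positivity)), ← ENNReal.ofReal_mul hγ0.le]
    congr 2
    have h9 : (9:ℝ) ^ d = 3 ^ d * 3 ^ d := by rw [← mul_pow]; norm_num
    field_simp [h9]
    rw [div_pow, mul_pow, h9]
    field_simp
  have caseA : ∀ z : EuclideanSpace ℝ (Fin d), R / 3 ≤ ρ z → ball z (ρ z) ⊆ ball x (3 * R) →
      ENNReal.ofReal (γ / 9 ^ d) * volume (ball x (3 * R)) ≤ volume (O ∩ ball x (3 * R)) := by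
    intro z h3 hsub
    calc ENNReal.ofReal (γ / 9 ^ d) * volume (ball x (3 * R))
        = ENNReal.ofReal γ * (ENNReal.ofReal ((R / 3) ^ d) * v1) := hLHS
      _ = ENNReal.ofReal γ * volume (ball z (R / 3)) := by rw [hvb z (by linarith)]
      _ ≤ ENNReal.ofReal γ * volume (ball z (ρ z)) :=
          mul_le_mul_right (measure_mono (ball_subset_ball h3)) _
      _ ≤ volume (O ∩ ball z (ρ z)) := hthick z
      _ ≤ volume (O ∩ ball x (3 * R)) := measure_mono (inter_subset_inter_right O hsub)
  by_cases hx1 : R / 3 ≤ ρ x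
  · refine caseA x hx1 (ball_subset_ball ?_)
    have h := hle x
    rw [← hRdef] at h
    linarith
  by_cases hzex : ∃ z ∈ closedBall x (2 * R), R / 3 ≤ ρ z
  · obtain ⟨z, hzmem, hz3⟩ := hzex
    push_neg at hx1
    have hicc : R / 3 ∈ Set.Icc (ρ x) (ρ z) := ⟨hx1.le, hz3⟩
    obtain ⟨z', hz'mem, hz'val⟩ :=
      (convex_closedBall x (2 * R)).isPreconnected.intermediate_value
        (mem_closedBall_self (by linarith)) hzmem hρ_cont.continuousOn hicc
    refine caseA z' (by rw [hz'val]) (ball_subset_ball' ?_)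
    rw [hz'val]
    have hd' : dist z' x ≤ 2 * R := mem_closedBall.1 hz'mem
    linarith
  · push_neg at hzex hx1
    obtain ⟨u, hut, hud, hcov⟩ := Vitali.exists_disjoint_subfamily_covering_enlargement_closedBall
      (closedBall x (2 * R)) id ρ (R / 3) (fun a ha => (hzex a ha).le) 4 (by norm_num)
    simp only [id] at hud hcov
    have hcount : u.Countable := by
      apply Set.PairwiseDisjoint.countable_of_isOpen (s := fun b => ball b (ρ b))
      · exact hud.mono fun b => ball_subset_closedBall
      · exact fun i _ => isOpen_ball
      · exact fun i _ => nonempty_ball.2 (hρ_pos i)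
    have hsmall : ∀ b ∈ u, closedBall b (ρ b) ⊆ ball x (3 * R) := by
      intro b hb
      have h1 : ρ b < R / 3 := hzex b (hut hb)
      have h2 : dist b x ≤ 2 * R := mem_closedBall.1 (hut hb)
      exact closedBall_subset_ball' (by linarith)
    set S := ∑' b : u, volume (ball (b : EuclideanSpace ℝ (Fin d)) (ρ b)) with hSdef
    have hcover : closedBall x (2 * R) ⊆ ⋃ b ∈ u, closedBall (b : EuclideanSpace ℝ (Fin d)) (4 * ρ b) := by
      intro a ha
      obtain ⟨b, hb, hba⟩ := hcov a ha
      exact mem_iUnion₂.2 ⟨b, hb, hba (mem_closedBall_self (hρ_pos a).le)⟩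
    have h2R : volume (closedBall x (2 * R))
        ≤ ∑' b : u, volume (closedBall (b : EuclideanSpace ℝ (Fin d)) (4 * ρ b)) :=
      (measure_mono hcover).trans (measure_biUnion_le volume hcount _)
    have hsum4 : ∑' b : u, volume (closedBall (b : EuclideanSpace ℝ (Fin d)) (4 * ρ b))
        = ENNReal.ofReal (4 ^ d) * S := by
      rw [hSdef, ← ENNReal.tsum_mul_left]
      congr 1
      funext b
      rw [hvcb _ (mul_nonneg (by norm_num) (hρ_pos _).le), hvb _ (hρ_pos _).le, ← mul_assoc,
        ← ENNReal.ofReal_mul (by positivity)]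
      congr 2
      rw [mul_pow]
    have hSlow : ENNReal.ofReal ((R / 2) ^ d) * v1 ≤ S := by
      have h4 : (ENNReal.ofReal ((4:ℝ) ^ d)) ≠ 0 := (ENNReal.ofReal_pos.2 (by positivity)).ne'
      have h4top : (ENNReal.ofReal ((4:ℝ) ^ d)) ≠ ⊤ := ENNReal.ofReal_ne_top
      rw [← ENNReal.mul_le_mul_iff_right h4 h4top]
      calc ENNReal.ofReal ((4:ℝ) ^ d) * (ENNReal.ofReal ((R / 2) ^ d) * v1)
          = ENNReal.ofReal ((2 * R) ^ d) * v1 := by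
            rw [← mul_assoc, ← ENNReal.ofReal_mul (by positivity)]
            congr 2
            rw [← mul_pow]
            ring_nf
        _ = volume (closedBall x (2 * R)) := (hvcb x (by linarith)).symm
        _ ≤ ENNReal.ofReal ((4:ℝ) ^ d) * S := h2R.trans_eq hsum4
    have hdisj2 : u.PairwiseDisjoint fun b => O ∩ closedBall b (ρ b) :=
      hud.mono fun b => inter_subset_right
    have hOunion : (⋃ b ∈ u, O ∩ closedBall (b : EuclideanSpace ℝ (Fin d)) (ρ b)) ⊆ O ∩ ball x (3 * R) := by
      intro y hy
      obtain ⟨b, hb, hyb⟩ := mem_iUnion₂.1 hy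
      exact ⟨hyb.1, hsmall b hb hyb.2⟩
    have hγS : ENNReal.ofReal γ * S ≤ volume (O ∩ ball x (3 * R)) := by
      rw [hSdef, ← ENNReal.tsum_mul_left]
      calc ∑' b : u, ENNReal.ofReal γ * volume (ball (b : EuclideanSpace ℝ (Fin d)) (ρ b))
          ≤ ∑' b : u, volume (O ∩ closedBall (b : EuclideanSpace ℝ (Fin d)) (ρ b)) := by
            apply ENNReal.tsum_le_tsum
            intro b
            exact (hthick b).trans
              (measure_mono (inter_subset_inter_right O ball_subset_closedBall))
        _ = volume (⋃ b ∈ u, O ∩ closedBall (b : EuclideanSpace ℝ (Fin d)) (ρ b)) :=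
            (measure_biUnion hcount hdisj2 fun b _ => hO.inter measurableSet_closedBall).symm
        _ ≤ volume (O ∩ ball x (3 * R)) := measure_mono hOunion
    calc ENNReal.ofReal (γ / 9 ^ d) * volume (ball x (3 * R))
        = ENNReal.ofReal γ * (ENNReal.ofReal ((R / 3) ^ d) * v1) := hLHS
      _ ≤ ENNReal.ofReal γ * (ENNReal.ofReal ((R / 2) ^ d) * v1) :=
          mul_le_mul_right (mul_le_mul_left
            (ENNReal.ofReal_le_ofReal (pow_le_pow_left₀ (by linarith) (by linarith) d)) _) _
      _ ≤ ENNReal.ofReal γ * S := mul_le_mul_right hSlow _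
      _ ≤ volume (O ∩ ball x (3 * R)) := hγS
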